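/- Let (X,d) be a compact metric space, y^1,…,y^n ∈ X distinct points, μ = (1/n) Σ_j δ_{y^j}, and δ > 0 such that the balls B_δ(y^j) are pairwise disjoint. Let ψ ∈ ℝⁿ be a dual maximizer for W₂²(ν,μ) with Laguerre cells A_j, and let π ∈ Γ₀(ν,μ) be an optimal coupling. Then for each j, | ν(B_δ(y^j)) - 1/n | ≤ C · W₂²(ν, μ) / δ², for a constant C depending only on n. In particular, ν(B_δ(y^j)) → 1/n as ν → μ in W₂. -/
import Mathlib


open MeasureTheory Filter

/-- `π` is a coupling of `ν` and `μ`. -/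
def IsCoupling {X : Type*} [MeasurableSpace X]
    (π : Measure (X × X)) (ν μ : Measure X) : Prop :=
  π.map Prod.fst = ν ∧ π.map Prod.snd = μ

/-- `π` is an optimal coupling of `ν` and `μ` for the squared-distance cost. -/
def IsOptimalCoupling {X : Type*} [MetricSpace X] [MeasurableSpace X]
    (π : Measure (X × X)) (ν μ : Measure X) : Prop :=
  IsCoupling π ν μ ∧ ∀ π' : Measure (X × X), IsCoupling π' ν μ →
    (∫ p : X × X, dist p.1 p.2 ^ 2 ∂π) ≤ ∫ p : X × X, dist p.1 p.2 ^ 2 ∂π'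

/-- The c-transform `ψ^c(x) = min_j ( d²(x, y^j) - ψ^j )`. -/
noncomputable def psiC {X : Type*} [MetricSpace X] {n : ℕ}
    (y : Fin n → X) (ψ : Fin n → ℝ) (x : X) : ℝ :=
  ⨅ j, (dist x (y j) ^ 2 - ψ j)

/-- The Kantorovich dual functional for semi-discrete optimal transport with
uniform weights `1/n`. -/
noncomputable def dualFun {X : Type*} [MetricSpace X] [MeasurableSpace X] {n : ℕ}
    (y : Fin n → X) (ν : Measure X) (ψ : Fin n → ℝ) : ℝ :=
  (∫ x, psiC y ψ x ∂ν) + ∑ j, (1 / (n : ℝ)) * ψ j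

/-- The empirical measure `(1/n) Σ_j δ_{y^j}`. -/
noncomputable def emp {Ω : Type*} [MeasurableSpace Ω] (n : ℕ)
    (x : Fin n → Ω) : Measure Ω :=
  (n : ENNReal)⁻¹ • ∑ j, Measure.dirac (x j)

lemma key {X : Type} [MetricSpace X] [MeasurableSpace X] [BorelSpace X] [CompactSpace X]
    {n : ℕ} (hn : 0 < n) (y : Fin n → X) (hy : Function.Injective y)
    (δ : ℝ) (hδ : 0 < δ)
    (hdisj : ∀ i j : Fin n, i ≠ j → Disjoint (Metric.ball (y i) δ) (Metric.ball (y j) δ))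
    (ν : Measure X) (hν : IsProbabilityMeasure ν)
    (π : Measure (X × X))
    (hmap1 : π.map Prod.fst = ν)
    (hmap2 : π.map Prod.snd = (n : ENNReal)⁻¹ • ∑ j, Measure.dirac (y j))
    (j : Fin n) :
    |(ν (Metric.ball (y j) δ)).toReal - 1 / (n : ℝ)| ≤
      (∫ p : X × X, dist p.1 p.2 ^ 2 ∂π) / δ ^ 2 := by
  set B : Set X := Metric.ball (y j) δ with hBdef
  have hB : MeasurableSet B := measurableSet_ball
  have hT : MeasurableSet (Prod.snd ⁻¹' ({y j} : Set X) : Set (X × X)) :=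
    (measurableSet_singleton _).preimage measurable_snd
  have hBpre : MeasurableSet (Prod.fst ⁻¹' B : Set (X × X)) := hB.preimage measurable_fst
  haveI : IsProbabilityMeasure π := by
    constructor
    have h1 : π.map Prod.fst Set.univ = ν Set.univ := by rw [hmap1]
    rw [Measure.map_apply measurable_fst MeasurableSet.univ] at h1
    simpa using h1
  -- f is integrable
  set f : X × X → ℝ := fun p => dist p.1 p.2 ^ 2 with hfdef
  have hfc : Continuous f := (continuous_fst.dist continuous_snd).pow 2
  have hint : Integrable f π :=
    hfc.integrable_of_hasCompactSupport (HasCompactSupport.of_compactSpace f)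
  set E : Set (X × X) := {p | δ ^ 2 ≤ f p} with hEdef
  have cheb : δ ^ 2 * (π E).toReal ≤ ∫ p, f p ∂π :=
    mul_meas_ge_le_integral_of_nonneg
      (Eventually.of_forall fun p => sq_nonneg _) hint (δ ^ 2)
  -- measure computations
  set T : Set (X × X) := Prod.snd ⁻¹' ({y j} : Set X) with hTdef
  have hνB : ν B = π (Prod.fst ⁻¹' B) := by
    rw [← hmap1, Measure.map_apply measurable_fst hB]
  have hμj : π T = (n : ENNReal)⁻¹ := by
    have h2 : π T = π.map Prod.snd {y j} := by
      rw [Measure.map_apply measurable_snd (measurableSet_singleton _)]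
    rw [h2, hmap2]
    simp only [Measure.smul_apply, Measure.coe_finset_sum, Finset.sum_apply, smul_eq_mul]
    have : ∀ i : Fin n, Measure.dirac (y i) ({y j} : Set X) = if i = j then 1 else 0 := by
      intro i
      rw [Measure.dirac_apply]
      by_cases h : i = j
      · simp [h]
      · simp [Set.indicator, hy.ne h, h]
    rw [Finset.sum_congr rfl (fun i _ => this i)]
    simp
  have hsplit1 : π (Prod.fst ⁻¹' B ∩ T) + π (Prod.fst ⁻¹' B \ T) = π (Prod.fst ⁻¹' B) :=
    measure_inter_add_diff _ hT
  have hsplit2 : π (T ∩ Prod.fst ⁻¹' B) + π (T \ Prod.fst ⁻¹' B) = π T :=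
    measure_inter_add_diff _ hBpre
  rw [Set.inter_comm] at hsplit2
  -- error bounds
  have hb : π (T \ Prod.fst ⁻¹' B) ≤ π E := by
    apply measure_mono
    rintro ⟨x, z⟩ ⟨hz, hx⟩
    simp only [hTdef, Set.mem_preimage, Set.mem_singleton_iff] at hz
    subst hz
    have : ¬ dist x (y j) < δ := fun h => hx (Metric.mem_ball.mpr h)
    have hd : δ ≤ dist x (y j) := not_lt.mp this
    exact pow_le_pow_left₀ hδ.le hd 2
  have ha : π (Prod.fst ⁻¹' B \ T) ≤ π E := by
    have hR0 : π (Prod.snd ⁻¹' (Set.range y)ᶜ) = 0 := by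
      have h2 : π (Prod.snd ⁻¹' (Set.range y)ᶜ) = π.map Prod.snd (Set.range y)ᶜ := by
        rw [Measure.map_apply measurable_snd
          ((Set.finite_range y).isClosed.measurableSet.compl)]
      rw [h2, hmap2]
      simp only [Measure.smul_apply, Measure.coe_finset_sum, Finset.sum_apply, smul_eq_mul]
      have : ∀ i : Fin n, Measure.dirac (y i) (Set.range y)ᶜ = 0 := by
        intro i
        rw [Measure.dirac_apply]
        simp [Set.indicator, Set.mem_range_self]
      rw [Finset.sum_congr rfl (fun i _ => this i)]
      simp
    have hsub : Prod.fst ⁻¹' B \ T ⊆ E ∪ Prod.snd ⁻¹' (Set.range y)ᶜ := by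
      rintro ⟨x, z⟩ ⟨hxB, hzT⟩
      simp only [hTdef, Set.mem_preimage, Set.mem_singleton_iff] at hzT
      by_cases hz : z ∈ Set.range y
      · obtain ⟨i, rfl⟩ := hz
        have hij : i ≠ j := fun h => hzT (by rw [h])
        left
        have hxnot : x ∉ Metric.ball (y i) δ :=
          fun h => (hdisj i j hij).ne_of_mem h hxB rfl
        have hd : δ ≤ dist x (y i) := not_lt.mp (fun h => hxnot (Metric.mem_ball.mpr h))
        exact pow_le_pow_left₀ hδ.le hd 2
      · right; exact hz
    calc π (Prod.fst ⁻¹' B \ T) ≤ π (E ∪ Prod.snd ⁻¹' (Set.range y)ᶜ) := measure_mono hsub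
      _ ≤ π E + π (Prod.snd ⁻¹' (Set.range y)ᶜ) := measure_union_le _ _
      _ = π E := by rw [hR0, add_zero]
  -- pass to reals
  have hEfin : (π E) ≠ ⊤ := measure_ne_top π _
  have hafin : π (Prod.fst ⁻¹' B \ T) ≠ ⊤ := measure_ne_top π _
  have hbfin : π (T \ Prod.fst ⁻¹' B) ≠ ⊤ := measure_ne_top π _
  have hmfin : π (Prod.fst ⁻¹' B ∩ T) ≠ ⊤ := measure_ne_top π _
  have hνBr : (ν B).toReal =
      (π (Prod.fst ⁻¹' B ∩ T)).toReal + (π (Prod.fst ⁻¹' B \ T)).toReal := by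
    rw [hνB, ← hsplit1, ENNReal.toReal_add hmfin hafin]
  have h1nr : 1 / (n : ℝ) =
      (π (Prod.fst ⁻¹' B ∩ T)).toReal + (π (T \ Prod.fst ⁻¹' B)).toReal := by
    rw [← ENNReal.toReal_add hmfin hbfin, hsplit2, hμj]
    simp [ENNReal.toReal_inv, one_div]
  have har : (π (Prod.fst ⁻¹' B \ T)).toReal ≤ (π E).toReal :=
    ENNReal.toReal_le_toReal hafin hEfin |>.mpr ha
  have hbr : (π (T \ Prod.fst ⁻¹' B)).toReal ≤ (π E).toReal :=
    ENNReal.toReal_le_toReal hbfin hEfin |>.mpr hb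
  have hanneg : 0 ≤ (π (Prod.fst ⁻¹' B \ T)).toReal := ENNReal.toReal_nonneg
  have hbnneg : 0 ≤ (π (T \ Prod.fst ⁻¹' B)).toReal := ENNReal.toReal_nonneg
  have hfinal : |(ν B).toReal - 1 / (n : ℝ)| ≤ (π E).toReal := by
    rw [hνBr, h1nr, abs_sub_le_iff]
    constructor <;> linarith
  have hEW : (π E).toReal ≤ (∫ p, f p ∂π) / δ ^ 2 := by
    rw [le_div_iff₀ (pow_pos hδ 2)]
    linarith [cheb]
  exact hfinal.trans hEW

/-- Mass-localization estimate: for a constant `C` depending only on `n`,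
`|ν(B_δ(y^j)) - 1/n| ≤ C W₂²(ν, μ)/δ²` (with `W₂²(ν,μ) = ∫ d² dπ` for an optimal
coupling `π`).  In particular `ν(B_δ(y^j)) → 1/n` as `ν → μ` in `W₂`. -/
theorem stmt18 (n : ℕ) (hn : 0 < n) :
    ∃ C : ℝ, 0 < C ∧
      ∀ (X : Type) [MetricSpace X] [MeasurableSpace X] [BorelSpace X]
        [CompactSpace X],
        ∀ (y : Fin n → X), Function.Injective y →
        ∀ δ : ℝ, 0 < δ →
        (∀ i j : Fin n, i ≠ j →
          Disjoint (Metric.ball (y i) δ) (Metric.ball (y j) δ)) →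
        ∀ ν : Measure X, IsProbabilityMeasure ν →
        ∀ ψ : Fin n → ℝ, (∀ φ : Fin n → ℝ, dualFun y ν φ ≤ dualFun y ν ψ) →
        ∀ π : Measure (X × X), IsOptimalCoupling π ν (emp n y) →
        (∀ j : Fin n,
          |(ν (Metric.ball (y j) δ)).toReal - 1 / (n : ℝ)| ≤
            C * (∫ p : X × X, dist p.1 p.2 ^ 2 ∂π) / δ ^ 2) ∧
        (∀ (νs : ℕ → Measure X) (πs : ℕ → Measure (X × X)),
          (∀ k, IsProbabilityMeasure (νs k)) →
          (∀ k, IsOptimalCoupling (πs k) (νs k) (emp n y)) →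
          Tendsto (fun k => ∫ p : X × X, dist p.1 p.2 ^ 2 ∂(πs k)) atTop (nhds 0) →
          (∀ k, ∃ ψk : Fin n → ℝ,
            ∀ φ : Fin n → ℝ, dualFun y (νs k) φ ≤ dualFun y (νs k) ψk) →
          ∀ j : Fin n,
            Tendsto (fun k => ((νs k) (Metric.ball (y j) δ)).toReal) atTop
              (nhds (1 / (n : ℝ)))) := by
  refine ⟨1, one_pos, ?_⟩
  intro X _ _ _ _ y hy δ hδ hdisj ν hν ψ hψ π hπ
  constructor
  · intro j
    have := key hn y hy δ hδ hdisj ν hν π hπ.1.1 (by rw [hπ.1.2]; rfl) j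
    simpa using this
  · intro νs πs hνs hπs hW hψs j
    have hbd : ∀ k, |((νs k) (Metric.ball (y j) δ)).toReal - 1 / (n : ℝ)| ≤
        (∫ p : X × X, dist p.1 p.2 ^ 2 ∂(πs k)) / δ ^ 2 := fun k =>
      key hn y hy δ hδ hdisj (νs k) (hνs k) (πs k) (hπs k).1.1
        (by rw [(hπs k).1.2]; rfl) j
    have hlim : Tendsto (fun k => (∫ p : X × X, dist p.1 p.2 ^ 2 ∂(πs k)) / δ ^ 2)
        atTop (nhds 0) := by
      simpa using hW.div_const (δ ^ 2)
    rw [tendsto_iff_dist_tendsto_zero]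
    apply squeeze_zero (fun k => dist_nonneg) _ hlim
    intro k
    simpa [Real.dist_eq] using hbd k
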